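/- Let w_1,...,w_i, v_1,...,v_j be i+j independent identically distributed {0,1}-valued random variables with j ≥ 1. Then P(∑_{k=1}^i w_k > ∑_{k=1}^j v_k) ≤ i/j. -/

import Mathlib

open MeasureTheory ProbabilityTheory

lemma integrable_of_bdd {Ω : Type*} [MeasurableSpace Ω] {μ : Measure Ω} [IsFiniteMeasure μ]
    {f : Ω → ℝ} {C : ℝ} (hm : Measurable f) (hb : ∀ ω, |f ω| ≤ C) : Integrable f μ :=
  (integrable_const C).mono' hm.aestronglyMeasurable (Filter.Eventually.of_forall hb)

lemma map_perm_pi {n : ℕ} (ν : Measure ℕ) [IsProbabilityMeasure ν] (σ : Equiv.Perm (Fin n)) :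
    Measure.map (fun x : Fin n → ℕ => x ∘ σ) (Measure.pi fun _ => ν) = Measure.pi fun _ => ν := by
  have h1 := Measure.pi_map_piCongrLeft σ.symm (fun _ : Fin n => ν)
  have h2 : ⇑(MeasurableEquiv.piCongrLeft (fun _ : Fin n => ℕ) σ.symm)
      = fun x : Fin n → ℕ => x ∘ σ := by
    funext x; funext b
    have h := MeasurableEquiv.piCongrLeft_apply_apply (β := fun _ : Fin n => ℕ) σ.symm x (σ b)
    simpa using h
  rw [h2] at h1
  exact h1


/-- Droste's lemma: if `w_1,…,w_i, v_1,…,v_j` are `i+j` independent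
identically distributed `{0,1}`-valued random variables with `j ≥ 1`, then
`P(∑ w_k > ∑ v_k) ≤ i/j`. -/
theorem droste_sum_compare {Ω : Type*} [MeasurableSpace Ω]
    (μ : Measure Ω) [IsProbabilityMeasure μ]
    (i j : ℕ) (hj : 1 ≤ j) (X : Fin (i + j) → Ω → ℕ)
    (hmeas : ∀ k, Measurable (X k))
    (hval : ∀ k ω, X k ω ≤ 1)
    (hindep : iIndepFun X μ)
    (hident : ∀ k l, Measure.map (X k) μ = Measure.map (X l) μ) :
    (μ {ω | (∑ k : Fin j, X (Fin.natAdd i k) ω) < ∑ k : Fin i, X (Fin.castAdd j k) ω}).toReal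
      ≤ (i : ℝ) / (j : ℝ) := by
  have hij : 0 < i + j := by omega
  set J : Ω → (Fin (i+j) → ℕ) := fun ω b => X b ω with hJ
  have hJmeas : Measurable J := measurable_pi_lambda _ fun b => hmeas b
  set ν : Measure ℕ := Measure.map (X ⟨0, hij⟩) μ with hν
  have hνprob : IsProbabilityMeasure ν := Measure.isProbabilityMeasure_map (hmeas _).aemeasurable
  set P : Measure (Fin (i+j) → ℕ) := Measure.pi (fun _ => ν) with hP
  have hPprob : IsProbabilityMeasure P := by rw [hP]; infer_instance
  -- joint law
  have hmap : Measure.map J μ = P := by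
    rw [hP]
    refine (Measure.pi_eq fun s hs => ?_).symm
    rw [Measure.map_apply hJmeas (MeasurableSet.univ_pi hs)]
    have hpre : J ⁻¹' (Set.pi Set.univ s) = ⋂ b, X b ⁻¹' s b := by
      ext ω; simp [hJ, Set.mem_pi]
    rw [hpre, hindep.meas_iInter fun b => ⟨s b, hs b, rfl⟩]
    refine Finset.prod_congr rfl fun b _ => ?_
    rw [← Measure.map_apply (hmeas b) (hs b), hident b ⟨0, hij⟩]
  -- notation
  set T : Ω → ℝ := fun ω => ∑ m : Fin j, (X (Fin.natAdd i m) ω : ℝ) with hT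
  have hTmeas : Measurable T := by
    apply Finset.measurable_sum
    exact fun m _ => measurable_from_top.comp (hmeas _)
  have hTnonneg : ∀ ω, 0 ≤ T ω := fun ω => Finset.sum_nonneg fun m _ => by positivity
  -- key per-k bound
  have hkey : ∀ k : Fin i,
      ∫ ω, (X (Fin.castAdd j k) ω : ℝ) / (T ω + 1) ∂μ ≤ 1 / (j + 1 : ℝ) := by
    intro k
    set c : Fin (i+j) := Fin.castAdd j k with hc
    have hinj : Function.Injective (Fin.natAdd i : Fin j → Fin (i+j)) := by
      intro a b h
      have := congrArg Fin.val h
      simp only [Fin.coe_natAdd] at this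
      exact Fin.ext (by omega)
    have hcne : ∀ m : Fin j, c ≠ Fin.natAdd i m := by
      intro m h
      have := congrArg Fin.val h
      simp only [hc, Fin.coe_natAdd, Fin.coe_castAdd] at this
      omega
    set A : Finset (Fin (i+j)) := insert c (Finset.image (Fin.natAdd i) Finset.univ) with hA
    have hcnot : c ∉ Finset.image (Fin.natAdd i) Finset.univ := by
      simp only [Finset.mem_image, Finset.mem_univ, true_and, not_exists]
      exact fun m h => hcne m h.symm
    set D : (Fin (i+j) → ℕ) → ℝ := fun x => ∑ b ∈ A, (x b : ℝ) with hD
    set F : Fin (i+j) → (Fin (i+j) → ℕ) → ℝ := fun a x => (x a : ℝ) / D x with hF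
    have hDnonneg : ∀ x, 0 ≤ D x := fun x => Finset.sum_nonneg fun b _ => by positivity
    have hDmeas : Measurable D :=
      Finset.measurable_sum A fun b _ => measurable_from_top.comp (measurable_pi_apply b)
    have hFmeas : ∀ a, Measurable (F a) := fun a =>
      (measurable_from_top.comp (measurable_pi_apply a)).div hDmeas
    have hFbd : ∀ a ∈ A, ∀ x, |F a x| ≤ 1 := by
      intro a ha x
      rw [hF]
      rw [abs_of_nonneg (div_nonneg (by positivity) (hDnonneg x))]
      refine div_le_one_of_le₀ ?_ (hDnonneg x)
      exact Finset.single_le_sum (f := fun b => ((x b : ℝ))) (fun b _ => by positivity) ha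
    have hFint : ∀ a ∈ A, Integrable (F a) P := fun a ha =>
      integrable_of_bdd (hFmeas a) (hFbd a ha)
    have hmemc : c ∈ A := Finset.mem_insert_self _ _
    have hmemn : ∀ m : Fin j, Fin.natAdd i m ∈ A := fun m =>
      Finset.mem_insert_of_mem (Finset.mem_image.mpr ⟨m, Finset.mem_univ m, rfl⟩)
    -- identification on Ω
    have hDJ : ∀ ω, D (J ω) = (X c ω : ℝ) + T ω := by
      intro ω
      rw [hD]
      simp only
      rw [hA, Finset.sum_insert hcnot, Finset.sum_image (fun a _ b _ h => hinj h)]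
    have hptw : ∀ ω, (X c ω : ℝ) / (T ω + 1) = F c (J ω) := by
      intro ω
      have : F c (J ω) = (X c ω : ℝ) / ((X c ω : ℝ) + T ω) := by
        rw [hF]; simp only; rw [hDJ ω]
      rw [this]
      rcases Nat.le_one_iff_eq_zero_or_eq_one.mp (hval c ω) with h | h <;> rw [h]
      · simp
      · norm_num [add_comm]
    -- change of variables
    have hCoV : ∀ a, ∫ x, F a x ∂P = ∫ ω, F a (J ω) ∂μ := by
      intro a
      rw [← hmap, integral_map hJmeas.aemeasurable]
      rw [hmap]
      exact (hFmeas a).aestronglyMeasurable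
    -- exchange
    have hswap : ∀ m : Fin j, ∫ x, F c x ∂P = ∫ x, F (Fin.natAdd i m) x ∂P := by
      intro m
      set σ : Equiv.Perm (Fin (i+j)) := Equiv.swap c (Fin.natAdd i m) with hσ
      have hgmeas : Measurable (fun x : Fin (i+j) → ℕ => x ∘ σ) :=
        measurable_pi_lambda _ fun b => measurable_pi_apply (σ b)
      have himg : Finset.image (⇑σ) A = A := by
        refine Finset.eq_of_subset_of_card_le ?_ ?_
        · intro b hb
          rcases Finset.mem_image.mp hb with ⟨b', hb', rfl⟩
          rcases Finset.mem_insert.mp hb' with rfl | hb'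
          · rw [hσ]
            simpa [Equiv.swap_apply_left] using hmemn m
          · rcases Finset.mem_image.mp hb' with ⟨m', _, rfl⟩
            by_cases hmm : m' = m
            · subst hmm
              rw [hσ]
              simpa [Equiv.swap_apply_right] using hmemc
            · rw [hσ, Equiv.swap_apply_of_ne_of_ne (fun h => hcne m' h.symm)
                (fun h => hmm (hinj h))]
              exact hmemn m'
        · rw [Finset.card_image_of_injective _ σ.injective]
      have hDσ : ∀ x : Fin (i+j) → ℕ, D (x ∘ σ) = D x := by
        intro x
        rw [hD]
        simp only [Function.comp_apply]
        calc ∑ b ∈ A, ((x (σ b) : ℝ))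
            = ∑ b ∈ Finset.image (⇑σ) A, (x b : ℝ) :=
              (Finset.sum_image (f := fun b => ((x b : ℝ))) (fun a _ b _ h => σ.injective h)).symm
        _ = ∑ b ∈ A, (x b : ℝ) := by rw [himg]
      have hFσ : ∀ x : Fin (i+j) → ℕ, F c (x ∘ σ) = F (Fin.natAdd i m) x := by
        intro x
        rw [hF]
        simp only [Function.comp_apply]
        rw [hDσ x, hσ, Equiv.swap_apply_left]
      calc ∫ x, F c x ∂P = ∫ x, F c x ∂(Measure.map (fun x : Fin (i+j) → ℕ => x ∘ σ) P) := by
            rw [hP, map_perm_pi]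
      _ = ∫ x, F c (x ∘ σ) ∂P :=
            integral_map hgmeas.aemeasurable (by
              rw [hP, map_perm_pi]
              exact (hFmeas c).aestronglyMeasurable)
      _ = ∫ x, F (Fin.natAdd i m) x ∂P := by simp_rw [hFσ]
    -- sum bound
    have hsumle : ∑ a ∈ A, ∫ x, F a x ∂P ≤ 1 := by
      rw [← integral_finset_sum A hFint]
      have hle : ∀ x, ∑ a ∈ A, F a x ≤ 1 := by
        intro x
        rw [hF]
        simp only
        rw [← Finset.sum_div]
        exact div_self_le_one _
      calc ∫ x, ∑ a ∈ A, F a x ∂P ≤ ∫ _x, (1:ℝ) ∂P :=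
            integral_mono (integrable_finset_sum A hFint) (integrable_const 1) hle
      _ = 1 := by simp
    have hsumeq : ∑ a ∈ A, ∫ x, F a x ∂P = (j + 1 : ℝ) * ∫ x, F c x ∂P := by
      rw [hA, Finset.sum_insert hcnot, Finset.sum_image (fun a _ b _ h => hinj h)]
      rw [Finset.sum_congr rfl (fun m _ => (hswap m).symm), Finset.sum_const, Finset.card_univ,
        Fintype.card_fin, nsmul_eq_mul]
      ring
    have hfinal : ∫ x, F c x ∂P ≤ 1 / (j + 1 : ℝ) := by
      rw [le_div_iff₀ (by positivity)]
      calc (∫ x, F c x ∂P) * (j+1) = (j+1) * ∫ x, F c x ∂P := mul_comm _ _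
      _ = ∑ a ∈ A, ∫ x, F a x ∂P := hsumeq.symm
      _ ≤ 1 := hsumle
    calc ∫ ω, (X c ω : ℝ) / (T ω + 1) ∂μ = ∫ ω, F c (J ω) ∂μ := by simp_rw [hptw]
    _ = ∫ x, F c x ∂P := (hCoV c).symm
    _ ≤ 1 / (j+1:ℝ) := hfinal
  -- main chain
  set S : Ω → ℝ := fun ω => ∑ k : Fin i, (X (Fin.castAdd j k) ω : ℝ) with hS
  set E : Set Ω := {ω | (∑ k : Fin j, X (Fin.natAdd i k) ω) < ∑ k : Fin i, X (Fin.castAdd j k) ω}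
    with hE
  have hEmeas : MeasurableSet E :=
    measurableSet_lt (Finset.measurable_sum _ fun _ _ => hmeas _)
      (Finset.measurable_sum _ fun _ _ => hmeas _)
  have hSnonneg : ∀ ω, 0 ≤ S ω := fun ω => Finset.sum_nonneg fun m _ => by positivity
  have hSle : ∀ ω, S ω ≤ i := by
    intro ω
    calc S ω ≤ ∑ _k : Fin i, (1:ℝ) := Finset.sum_le_sum fun k _ => by
            exact_mod_cast hval (Fin.castAdd j k) ω
    _ = i := by simp
  have hT1 : ∀ ω, (1:ℝ) ≤ T ω + 1 := fun ω => by linarith [hTnonneg ω]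
  have hdivmeas : Measurable fun ω => S ω / (T ω + 1) :=
    (Finset.measurable_sum _ fun _ _ => measurable_from_top.comp (hmeas _)).div
      (hTmeas.add measurable_const)
  have hdivint : Integrable (fun ω => S ω / (T ω + 1)) μ := by
    refine integrable_of_bdd (C := i) hdivmeas fun ω => ?_
    rw [abs_of_nonneg (div_nonneg (hSnonneg ω) (by linarith [hTnonneg ω]))]
    calc S ω / (T ω + 1) ≤ S ω := div_le_self (hSnonneg ω) (hT1 ω)
    _ ≤ i := hSle ω
  have hptwise : ∀ ω, E.indicator (fun _ => (1:ℝ)) ω ≤ S ω / (T ω + 1) := by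
    intro ω
    by_cases hω : ω ∈ E
    · rw [Set.indicator_of_mem hω]
      rw [hE] at hω
      have hn : (∑ k : Fin j, X (Fin.natAdd i k) ω) + 1 ≤ ∑ k : Fin i, X (Fin.castAdd j k) ω :=
        hω
      have hr : T ω + 1 ≤ S ω := by
        rw [hT, hS]
        push_cast
        exact_mod_cast Nat.cast_le.mpr hn
      exact (one_le_div (by linarith [hTnonneg ω])).mpr hr
    · rw [Set.indicator_of_notMem hω]
      exact div_nonneg (hSnonneg ω) (by linarith [hTnonneg ω])
  have h1 : (μ E).toReal = ∫ ω, E.indicator (fun _ => (1:ℝ)) ω ∂μ :=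
    (integral_indicator_one hEmeas).symm
  have hindint : Integrable (E.indicator fun _ => (1:ℝ)) μ := by
    refine integrable_of_bdd (C := 1) ((measurable_const).indicator hEmeas) fun ω => ?_
    by_cases hω : ω ∈ E <;> simp [hω]
  have h2 : ∫ ω, E.indicator (fun _ => (1:ℝ)) ω ∂μ ≤ ∫ ω, S ω / (T ω + 1) ∂μ :=
    integral_mono hindint hdivint hptwise
  have h3 : ∫ ω, S ω / (T ω + 1) ∂μ
      = ∑ k : Fin i, ∫ ω, (X (Fin.castAdd j k) ω : ℝ) / (T ω + 1) ∂μ := by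
    have : ∀ ω, S ω / (T ω + 1) = ∑ k : Fin i, (X (Fin.castAdd j k) ω : ℝ) / (T ω + 1) := by
      intro ω; rw [hS]; exact Finset.sum_div ..
    simp_rw [this]
    refine integral_finset_sum _ fun k _ => ?_
    refine integrable_of_bdd (C := 1)
      ((measurable_from_top.comp (hmeas _)).div (hTmeas.add measurable_const)) fun ω => ?_
    rw [abs_of_nonneg (div_nonneg (by positivity) (by linarith [hTnonneg ω]))]
    refine div_le_one_of_le₀ ?_ (by linarith [hTnonneg ω])
    have hv : ((X (Fin.castAdd j k) ω : ℝ)) ≤ 1 := by exact_mod_cast hval (Fin.castAdd j k) ω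
    linarith [hT1 ω]
  have h4 : ∑ k : Fin i, ∫ ω, (X (Fin.castAdd j k) ω : ℝ) / (T ω + 1) ∂μ
      ≤ ∑ _k : Fin i, 1 / (j + 1 : ℝ) := Finset.sum_le_sum fun k _ => hkey k
  have h5 : (∑ _k : Fin i, 1 / (j + 1 : ℝ)) = i / (j + 1 : ℝ) := by
    rw [Finset.sum_const, Finset.card_univ, Fintype.card_fin, nsmul_eq_mul, mul_one_div]
  have h6 : (i : ℝ) / (j + 1 : ℝ) ≤ i / j := by
    have hj0 : (0:ℝ) < j := by exact_mod_cast hj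
    gcongr
    linarith
  linarith [h1, h2, h3, h4, h5, h6]
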